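/- arXiv:2605.15422 — 3 statements merged into one kernel-verified Lean document; each statement's English description precedes it below -/
import Mathlib

section
/- Fix n > 0, d > 0, logits s : Fin n → ℝ, and values v : Fin n → ℝ^d. Let A and B be disjoint nonempty finite subsets of Fin n with A ∪ B = Fin n, with online-softmax states (m_A, ℓ_A, o_A) and (m_B, ℓ_B, o_B). Let m = max(m_A, m_B), ℓ = exp(m_A − m)·ℓ_A + exp(m_B − m)·ℓ_B, and o = exp(m_A − m)·o_A + exp(m_B − m)·o_B. Then ℓ > 0, o/ℓ = ∑_{j<n} softmax(s)_j · v_j, and m + log ℓ = log ∑_{j<n} exp(s_j). (Correctness of the FlashAttention online-softmax merge: carrying running statistics from the context phase into the decoded phase produces the exact softmax-weighted average and log-sum-exp.) -/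
open Finset

/-- `softmax(x)_j = exp(x_j) / ∑_{l<n} exp(x_l)`. -/
noncomputable def softmax {n : ℕ} (x : Fin n → ℝ) : Fin n → ℝ :=
  fun j => Real.exp (x j) / ∑ l, Real.exp (x l)

/-- Correctness of the FlashAttention online-softmax merge: merging the
online-softmax states of two disjoint blocks `A`, `B` covering `Fin n` yields
`ℓ > 0`, the exact softmax-weighted average `o/ℓ = ∑ softmax(s)_j • v_j`, and the
exact log-sum-exp `m + log ℓ = log ∑ exp(s_j)`. -/
theorem online_softmax_merge {n d : ℕ} (hn : 0 < n) (hd : 0 < d)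
    (s : Fin n → ℝ) (v : Fin n → Fin d → ℝ)
    (A B : Finset (Fin n)) (hA : A.Nonempty) (hB : B.Nonempty)
    (hdisj : Disjoint A B) (hunion : A ∪ B = Finset.univ)
    (mA ℓA : ℝ) (oA : Fin d → ℝ) (mB ℓB : ℝ) (oB : Fin d → ℝ)
    (hmA : mA = A.sup' hA s)
    (hℓA : ℓA = ∑ j ∈ A, Real.exp (s j - mA))
    (hoA : oA = ∑ j ∈ A, Real.exp (s j - mA) • v j)
    (hmB : mB = B.sup' hB s)
    (hℓB : ℓB = ∑ j ∈ B, Real.exp (s j - mB))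
    (hoB : oB = ∑ j ∈ B, Real.exp (s j - mB) • v j)
    (m ℓ : ℝ) (o : Fin d → ℝ)
    (hm : m = max mA mB)
    (hℓ : ℓ = Real.exp (mA - m) * ℓA + Real.exp (mB - m) * ℓB)
    (ho : o = Real.exp (mA - m) • oA + Real.exp (mB - m) • oB) :
    0 < ℓ ∧
    ℓ⁻¹ • o = ∑ j, softmax s j • v j ∧
    m + Real.log ℓ = Real.log (∑ j, Real.exp (s j)) := by

  have hA1 : ∀ j ∈ A, Real.exp (mA - m) * Real.exp (s j - mA) = Real.exp (s j - m) :=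
    fun j _ => by rw [← Real.exp_add]; ring_nf
  have hB1 : ∀ j ∈ B, Real.exp (mB - m) * Real.exp (s j - mB) = Real.exp (s j - m) :=
    fun j _ => by rw [← Real.exp_add]; ring_nf
  have hℓ' : ℓ = ∑ j, Real.exp (s j - m) := by
    rw [hℓ, hℓA, hℓB, Finset.mul_sum, Finset.mul_sum,
      Finset.sum_congr rfl hA1, Finset.sum_congr rfl hB1, ← Finset.sum_union hdisj, hunion]
  have hoA' : Real.exp (mA - m) • oA = ∑ j ∈ A, Real.exp (s j - m) • v j := by
    rw [hoA, Finset.smul_sum]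
    exact Finset.sum_congr rfl fun j hj => by rw [smul_smul, hA1 j hj]
  have hoB' : Real.exp (mB - m) • oB = ∑ j ∈ B, Real.exp (s j - m) • v j := by
    rw [hoB, Finset.smul_sum]
    exact Finset.sum_congr rfl fun j hj => by rw [smul_smul, hB1 j hj]
  have ho' : o = ∑ j, Real.exp (s j - m) • v j := by
    rw [ho, hoA', hoB', ← Finset.sum_union hdisj, hunion]
  have hSpos : 0 < ∑ j, Real.exp (s j) :=
    Finset.sum_pos (fun j _ => Real.exp_pos _) (Finset.univ_nonempty_iff.2 ⟨⟨0, hn⟩⟩)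
  have hℓS : ℓ = Real.exp (-m) * ∑ j, Real.exp (s j) := by
    rw [hℓ', Finset.mul_sum]
    refine Finset.sum_congr rfl fun j _ => ?_
    rw [← Real.exp_add]; ring_nf
  have hℓpos : 0 < ℓ := by
    rw [hℓS]; exact mul_pos (Real.exp_pos _) hSpos
  refine ⟨hℓpos, ?_, ?_⟩
  · rw [ho', Finset.smul_sum]
    refine Finset.sum_congr rfl fun j _ => ?_
    rw [smul_smul]
    congr 1
    rw [hℓS, softmax, Real.exp_sub, Real.exp_neg]
    field_simp
  · rw [hℓS, Real.log_mul (Real.exp_ne_zero _) (ne_of_gt hSpos), Real.log_exp]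
    ring
end

section
/- On triples (m, ℓ, o) ∈ ℝ × ℝ × ℝ^d, define merge((m₁,ℓ₁,o₁),(m₂,ℓ₂,o₂)) = (m, exp(m₁−m)ℓ₁ + exp(m₂−m)ℓ₂, exp(m₁−m)o₁ + exp(m₂−m)o₂) where m = max(m₁, m₂). Then merge is commutative and associative: merge(x,y) = merge(y,x) and merge(merge(x,y),z) = merge(x,merge(y,z)) for all triples x, y, z. (Hence the order in which tile-level online-softmax states are combined does not affect the result.) -/
/-- Merge of two online-softmax states `(m, ℓ, o) ∈ ℝ × ℝ × ℝ^d`: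
`merge((m₁,ℓ₁,o₁),(m₂,ℓ₂,o₂)) = (m, exp(m₁−m)ℓ₁ + exp(m₂−m)ℓ₂,
exp(m₁−m)•o₁ + exp(m₂−m)•o₂)` with `m = max(m₁,m₂)`. -/
noncomputable def osMerge {d : ℕ} (x y : ℝ × ℝ × (Fin d → ℝ)) :
    ℝ × ℝ × (Fin d → ℝ) :=
  (max x.1 y.1,
    Real.exp (x.1 - max x.1 y.1) * x.2.1 + Real.exp (y.1 - max x.1 y.1) * y.2.1,
    Real.exp (x.1 - max x.1 y.1) • x.2.2 + Real.exp (y.1 - max x.1 y.1) • y.2.2)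

/-- The online-softmax merge is commutative and associative; hence the order in
which tile-level states are combined does not affect the result. -/
theorem osMerge_comm_assoc {d : ℕ} :
    (∀ x y : ℝ × ℝ × (Fin d → ℝ), osMerge x y = osMerge y x) ∧
    (∀ x y z : ℝ × ℝ × (Fin d → ℝ),
      osMerge (osMerge x y) z = osMerge x (osMerge y z)) := by
  constructor
  · intro x y
    simp only [osMerge, max_comm x.1 y.1]
    refine Prod.ext rfl (Prod.ext (by ring) ?_)
    funext i
    simp only [Pi.add_apply, Pi.smul_apply, smul_eq_mul]
    ring
  · intro x y z
    set M := max x.1 (max y.1 z.1) with hM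
    simp only [osMerge, max_assoc, ← hM, mul_add, add_mul, smul_add, smul_smul,
      ← mul_assoc, ← Real.exp_add]
    rw [show x.1 ⊔ y.1 - M + (x.1 - x.1 ⊔ y.1) = x.1 - M by ring,
      show x.1 ⊔ y.1 - M + (y.1 - x.1 ⊔ y.1) = y.1 - M by ring,
      show y.1 ⊔ z.1 - M + (y.1 - y.1 ⊔ z.1) = y.1 - M by ring,
      show y.1 ⊔ z.1 - M + (z.1 - y.1 ⊔ z.1) = z.1 - M by ring]
    refine Prod.ext rfl (Prod.ext (by ring) ?_)
    funext i
    simp only [Pi.add_apply, Pi.smul_apply, smul_eq_mul]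
    ring
end

section
/- Fix n > 0, d > 0, logits s : Fin n → ℝ, and values v : Fin n → ℝ^d. Let A₁, …, A_T be a list of pairwise disjoint nonempty finite subsets of Fin n whose union is Fin n, and let (m_t, ℓ_t, o_t) be the online-softmax state over A_t. Then the fold of the merge operation over the list of states (m_1,ℓ_1,o_1), …, (m_T,ℓ_T,o_T) yields a state (m, ℓ, o) with m = max_{j<n} s_j, ℓ > 0, o/ℓ = ∑_{j<n} softmax(s)_j · v_j, and m + log ℓ = log ∑_{j<n} exp(s_j). (Tile-by-tile online-softmax iteration over any block partition of the keys — in particular over the two disjoint context and decoded regions of the DualKV kernel — computes exact attention.) -/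
open Finset

/-- Online-softmax state over a (nonempty) index set `A ⊆ Fin n`:
`(max_{j∈A} s_j, ∑_{j∈A} exp(s_j − m_A), ∑_{j∈A} exp(s_j − m_A) • v_j)`. -/
noncomputable def osState {n d : ℕ} (s : Fin n → ℝ) (v : Fin n → Fin d → ℝ)
    (A : Finset (Fin n)) : ℝ × ℝ × (Fin d → ℝ) :=
  if hA : A.Nonempty then
    (A.sup' hA s, ∑ j ∈ A, Real.exp (s j - A.sup' hA s),
      ∑ j ∈ A, Real.exp (s j - A.sup' hA s) • v j)
  else (0, 0, 0)

lemma scale_sum {n d : ℕ} (s : Fin n → ℝ) (v : Fin n → Fin d → ℝ)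
    (A : Finset (Fin n)) (a m : ℝ) :
    (Real.exp (a - m) * ∑ j ∈ A, Real.exp (s j - a)
        = ∑ j ∈ A, Real.exp (s j - m)) ∧
    (Real.exp (a - m) • ∑ j ∈ A, Real.exp (s j - a) • v j
        = ∑ j ∈ A, Real.exp (s j - m) • v j) := by
  constructor
  · rw [Finset.mul_sum]
    exact Finset.sum_congr rfl fun j _ => by rw [← Real.exp_add]; ring_nf
  · rw [Finset.smul_sum]
    refine Finset.sum_congr rfl fun j _ => ?_
    rw [smul_smul, ← Real.exp_add]; ring_nf

lemma osMerge_state {n d : ℕ} (s : Fin n → ℝ) (v : Fin n → Fin d → ℝ)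
    {A B : Finset (Fin n)} (hA : A.Nonempty) (hB : B.Nonempty)
    (hAB : Disjoint A B) :
    osMerge (osState s v A) (osState s v B) = osState s v (A ∪ B) := by
  have hU : (A ∪ B).Nonempty := hA.mono Finset.subset_union_left
  rw [osState, osState, osState, dif_pos hA, dif_pos hB, dif_pos hU]
  have hm : (A ∪ B).sup' hU s = max (A.sup' hA s) (B.sup' hB s) :=
    Finset.sup'_union hA hB s
  unfold osMerge
  dsimp only
  rw [hm, (scale_sum s v A (A.sup' hA s) (max (A.sup' hA s) (B.sup' hB s))).1,
    (scale_sum s v B (B.sup' hB s) (max (A.sup' hA s) (B.sup' hB s))).1,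
    (scale_sum s v A (A.sup' hA s) (max (A.sup' hA s) (B.sup' hB s))).2,
    (scale_sum s v B (B.sup' hB s) (max (A.sup' hA s) (B.sup' hB s))).2,
    ← Finset.sum_union hAB, ← Finset.sum_union hAB]

lemma foldr_union {n : ℕ} (r : List (Finset (Fin n))) (X : Finset (Fin n)) :
    r.foldr (· ∪ ·) X = X ∪ r.foldr (· ∪ ·) ∅ := by
  induction r with
  | nil => simp
  | cons C t ih => simp only [List.foldr_cons, ih, Finset.union_left_comm]

lemma os_fold_eq {n d : ℕ} (s : Fin n → ℝ) (v : Fin n → Fin d → ℝ) :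
    ∀ (As : List (Finset (Fin n))) (A0 : Finset (Fin n)),
    A0.Nonempty → (∀ A ∈ As, A.Nonempty) → (∀ A ∈ As, Disjoint A0 A) →
    As.Pairwise (fun A B => Disjoint A B) →
    (As.map (osState s v)).foldl osMerge (osState s v A0)
      = osState s v (As.foldr (· ∪ ·) A0) := by
  intro As
  induction As with
  | nil => intro A0 _ _ _ _; rfl
  | cons B rest ih =>
    intro A0 hA0 hne hdisj hpair
    have hB : B.Nonempty := hne B (by simp)
    have hd0B : Disjoint A0 B := hdisj B (by simp)
    simp only [List.map_cons, List.foldl_cons, List.foldr_cons]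
    rw [osMerge_state s v hA0 hB hd0B]
    rw [ih (A0 ∪ B) (hA0.mono Finset.subset_union_left)
      (fun A hA => hne A (by simp [hA]))
      (fun A hA => Finset.disjoint_union_left.mpr
        ⟨hdisj A (by simp [hA]), (List.pairwise_cons.mp hpair).1 A hA⟩)
      (List.pairwise_cons.mp hpair).2]
    congr 1
    rw [foldr_union rest (A0 ∪ B), foldr_union rest A0,
      Finset.union_comm A0 B, Finset.union_assoc]

/-- Tile-by-tile online-softmax iteration over any block partition of the keys
computes exact attention: folding the merge over the states of pairwise-disjoint
nonempty blocks covering `Fin n` yields `m = max_j s_j`, `ℓ > 0`,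
`o/ℓ = ∑ softmax(s)_j • v_j`, and `m + log ℓ = log ∑ exp(s_j)`. -/
theorem online_softmax_fold {n d : ℕ} (hn : 0 < n) (hd : 0 < d)
    (s : Fin n → ℝ) (v : Fin n → Fin d → ℝ)
    (A0 : Finset (Fin n)) (As : List (Finset (Fin n)))
    (hpair : (A0 :: As).Pairwise fun A B => Disjoint A B)
    (hne : ∀ A ∈ A0 :: As, A.Nonempty)
    (hcover : (A0 :: As).foldr (· ∪ ·) ∅ = Finset.univ) :
    ((As.map (osState s v)).foldl osMerge (osState s v A0)).1
        = Finset.univ.sup' (Finset.univ_nonempty_iff.mpr ⟨⟨0, hn⟩⟩) s ∧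
    0 < ((As.map (osState s v)).foldl osMerge (osState s v A0)).2.1 ∧
    (((As.map (osState s v)).foldl osMerge (osState s v A0)).2.1)⁻¹ •
        ((As.map (osState s v)).foldl osMerge (osState s v A0)).2.2
      = ∑ j, softmax s j • v j ∧
    ((As.map (osState s v)).foldl osMerge (osState s v A0)).1 +
        Real.log ((As.map (osState s v)).foldl osMerge (osState s v A0)).2.1
      = Real.log (∑ j, Real.exp (s j)) := by
  have hA0 : A0.Nonempty := hne A0 (by simp)
  have hfold : (As.map (osState s v)).foldl osMerge (osState s v A0)
      = osState s v Finset.univ := by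
    rw [os_fold_eq s v As A0 hA0 (fun A hA => hne A (by simp [hA]))
      (fun A hA => (List.pairwise_cons.mp hpair).1 A hA)
      (List.pairwise_cons.mp hpair).2]
    congr 1
    rw [← hcover]
    simp only [List.foldr_cons]
    rw [foldr_union As A0]
  rw [hfold]
  have hu : (Finset.univ : Finset (Fin n)).Nonempty := ⟨⟨0, hn⟩, Finset.mem_univ _⟩
  rw [osState, dif_pos hu]
  set M := Finset.univ.sup' hu s with hM
  have hlpos : 0 < ∑ j, Real.exp (s j - M) :=
    Finset.sum_pos (fun j _ => Real.exp_pos _) hu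
  refine ⟨by congr 1, hlpos, ?_, ?_⟩
  · dsimp only
    rw [Finset.smul_sum]
    refine Finset.sum_congr rfl fun j _ => ?_
    rw [smul_smul]
    congr 1
    unfold softmax
    rw [inv_mul_eq_div]
    rw [div_eq_div_iff hlpos.ne' (Finset.sum_pos (fun j _ => Real.exp_pos (s j)) hu).ne']
    rw [Finset.mul_sum, Finset.mul_sum]
    refine Finset.sum_congr rfl fun l _ => ?_
    rw [← Real.exp_add, ← Real.exp_add]; ring_nf
  · dsimp only
    have key : (∑ j, Real.exp (s j)) = Real.exp M * ∑ j, Real.exp (s j - M) := by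
      rw [Finset.mul_sum]
      exact Finset.sum_congr rfl fun j _ => by rw [← Real.exp_add]; ring_nf
    rw [key, Real.log_mul (Real.exp_ne_zero _) hlpos.ne', Real.log_exp]
end
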